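/- Existence of a canonical shifting solution (tensor case, k = d − 1): for every d ≥ 1, sizes n : Fin d → ℕ (all positive), tensor A : (∀ j : Fin d, Fin (n j)) → ℝ, and finite set Ω of known index vectors, there exists a canonical shifting solution S (for subtensor dimension k = d − 1) for (A, Ω). (For instance, any minimizer of the convex quadratic S ↦ ∑_{α ∈ Ω} (A(α) − ∑_{j : Fin d} S j (α j))² satisfies the defining zero-sum slice conditions.) -/

import Mathlib

open Finset

/-- `S` is a canonical shifting solution (subtensor dimension `k = d - 1`) for `(A, Ω)`:
for every dimension `j` and coordinate `v` whose known slice is nonempty, the sum of the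
shifted tensor `A'(α) = A(α) - ∑ j', S j' (α j')` over that slice is zero. -/
def IsCSS {d : ℕ} {n : Fin d → ℕ} (A : (∀ j, Fin (n j)) → ℝ)
    (Ω : Finset (∀ j, Fin (n j))) (S : ∀ j, Fin (n j) → ℝ) : Prop :=
  ∀ (j : Fin d) (v : Fin (n j)),
    (Ω.filter (fun α => α j = v)).Nonempty →
    ∑ α ∈ Ω.filter (fun α => α j = v), (A α - ∑ j', S j' (α j')) = 0

/-- `α` (an unknown entry) is fully supported w.r.t. `Ω`: there is `β` differing from `α`
in every coordinate such that every mixed vertex of the hypercube spanned by `α` and `β`,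
other than `α` itself, is a known entry. -/
def FullySupported {d : ℕ} {n : Fin d → ℕ} (Ω : Finset (∀ j, Fin (n j)))
    (α : ∀ j, Fin (n j)) : Prop :=
  ∃ β : ∀ j, Fin (n j), (∀ j, β j ≠ α j) ∧
    ∀ α' : ∀ j, Fin (n j), (∀ j, α' j = α j ∨ α' j = β j) → α' ≠ α → α' ∈ Ω

/-- Existence of a canonical shifting solution (tensor case, `k = d - 1`). -/
theorem css_exists {d : ℕ} (hd : 1 ≤ d) {n : Fin d → ℕ} (hn : ∀ j, 0 < n j)
    (A : (∀ j, Fin (n j)) → ℝ) (Ω : Finset (∀ j, Fin (n j))) :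
    ∃ S : ∀ j, Fin (n j) → ℝ, IsCSS A Ω S := by
  classical
  -- The ambient Euclidean space indexed by the known entries.
  let L : (∀ j, Fin (n j) → ℝ) →ₗ[ℝ] EuclideanSpace ℝ Ω :=
    { toFun := fun S => WithLp.toLp 2 (fun α : Ω => ∑ j, S j (α.1 j))
      map_add' := by
        intro x y; ext α; simp [Finset.sum_add_distrib]
      map_smul' := by
        intro c x; ext α; simp [Finset.mul_sum] }
  let W : Submodule ℝ (EuclideanSpace ℝ Ω) := LinearMap.range L
  haveI : FiniteDimensional ℝ (∀ j, Fin (n j) → ℝ) := inferInstance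
  haveI : FiniteDimensional ℝ W := inferInstance
  let b : EuclideanSpace ℝ Ω := WithLp.toLp 2 (fun α : Ω => A α.1)
  obtain ⟨S, hS⟩ : ∃ S, L S = (W.orthogonalProjectionOnto b : EuclideanSpace ℝ Ω) :=
    LinearMap.mem_range.mp (W.orthogonalProjectionOnto b).2
  refine ⟨S, ?_⟩
  intro j v _
  have horth : b - (W.orthogonalProjectionOnto b : EuclideanSpace ℝ Ω) ∈ Wᗮ :=
    W.sub_starProjection_mem_orthogonal b
  -- the test direction: indicator of coordinate `v` in dimension `j`
  let T : ∀ j', Fin (n j') → ℝ :=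
    fun j' w => if (⟨j', w⟩ : Σ i, Fin (n i)) = ⟨j, v⟩ then 1 else 0
  have hT : ∀ α : ∀ i, Fin (n i), ∑ j', T j' (α j') = if α j = v then (1:ℝ) else 0 := by
    intro α
    rw [Finset.sum_eq_single j]
    · simp [T, Sigma.mk.inj_iff]
    · intro j' _ hj'
      simp [T, Sigma.mk.inj_iff, hj']
    · intro h; exact absurd (Finset.mem_univ j) h
  have hinner : @inner ℝ _ _ (L T) (b - (W.orthogonalProjectionOnto b : EuclideanSpace ℝ Ω)) = 0 :=
    (Submodule.mem_orthogonal W _).mp horth (L T) (LinearMap.mem_range_self L T)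
  rw [← hS] at hinner
  have key : ∑ x : Ω, (if x.1 j = v then (1:ℝ) else 0) * (A x.1 - ∑ j', S j' (x.1 j')) =
      @inner ℝ _ _ (L T) (b - L S) := by
    rw [PiLp.inner_apply]
    refine Finset.sum_congr rfl fun x _ => ?_
    have h1 : (L T) x = if x.1 j = v then (1:ℝ) else 0 := hT x.1
    have hsub : (b - L S) x = A x.1 - ∑ j', S j' (x.1 j') := rfl
    rw [RCLike.inner_apply', h1, hsub, starRingEnd_apply, star_trivial]
  calc ∑ α ∈ Ω.filter (fun α => α j = v), (A α - ∑ j', S j' (α j'))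
      = ∑ α ∈ Ω, if α j = v then (A α - ∑ j', S j' (α j')) else 0 := by
        rw [Finset.sum_filter]
    _ = ∑ x : Ω, (if x.1 j = v then (1:ℝ) else 0) * (A x.1 - ∑ j', S j' (x.1 j')) := by
        rw [← Finset.sum_coe_sort Ω (fun α => if α j = v then (A α - ∑ j', S j' (α j')) else 0)]
        exact Finset.sum_congr rfl fun x _ => by split <;> simp
    _ = 0 := key.trans hinner
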